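/- Let $0\le\alpha<1$, $\theta>-\alpha$, and let $M_n(\eta)=\binom{n}{\eta}\frac{1}{a_1(\eta)!\cdots a_n(\eta)!}\frac{\prod_{l=0}^{d-1}(\theta+l\alpha)}{(\theta)_{(n)}}\prod_{i=1}^d (1-\alpha)_{(\eta_i-1)}$ be the Ewens–Pitman sampling formula for a partition $\eta$ of $n$ of length $d$. Then $\{M_n\}$ is consistent: for every partition $\eta$ of $n$, $M_{n-1}(\eta) = \sum_{\lambda}\frac{\binom{n-1}{\eta}\,\chi(\eta,\lambda)}{\binom{n}{\lambda}}\,M_n(\lambda)$, the sum being over partitions $\lambda$ of $n$ covering $\eta$, with $\chi(\eta,\lambda)=a_{\lambda_i}(\lambda)$ where $\lambda_i$ is the increased part. -/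

import Mathlib

open Finset

/-- Kingman-graph edge weight `χ(ω,η)`: for a covering pair, the increased part size is
the unique element of `η - ω`, and the weight is the number of parts of `η` of that size. -/
def chiW (ω η : Multiset ℕ) : ℕ := η.count ((η - ω).sum)

/-- The partitions covering `ω` (increase one part by `1`, or add a new part `1`). -/
def upSet (ω : Multiset ℕ) : Finset (Multiset ℕ) :=
  insert (1 ::ₘ ω) (ω.toFinset.image (fun k => (k + 1) ::ₘ ω.erase k))

/-- The partitions covered by `η` (decrease one part by `1`, deleting it if it was `1`). -/
def downSet (η : Multiset ℕ) : Finset (Multiset ℕ) :=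
  η.toFinset.image (fun k => if k = 1 then η.erase 1 else (k - 1) ::ₘ η.erase k)

/-- Total path weight from `ω` up to `η` in the Kingman graph, with fuel. -/
def kdimAux : ℕ → Multiset ℕ → Multiset ℕ → ℕ
  | 0, ω, η => if ω = η then 1 else 0
  | m + 1, ω, η => ∑ lam ∈ downSet η, chiW lam η * kdimAux m ω lam

/-- `dim(ω, η)`: total path weight from `ω` to `η`. -/
def kdim (ω η : Multiset ℕ) : ℕ := kdimAux (η.sum - ω.sum) ω η

/-- Multinomial coefficient `(|η| choose η)` as a rational. -/
def multQ (η : Multiset ℕ) : ℚ := (Nat.factorial η.sum : ℚ) / ((η.map Nat.factorial).prod : ℕ)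

/-- Multinomial coefficient as a real. -/
noncomputable def multR (η : Multiset ℕ) : ℝ := (Nat.factorial η.sum : ℝ) / ((η.map Nat.factorial).prod : ℕ)

/-- Young-diagram containment `ω ⊂ η` (componentwise on ranked parts, via conjugates). -/
def ydLE (ω η : Multiset ℕ) : Prop :=
  ∀ k, Multiset.card (ω.filter (fun a => k ≤ a)) ≤ Multiset.card (η.filter (fun a => k ≤ a))

/-- Rising factorial `a (a+1) ⋯ (a+k-1)`. -/
noncomputable def riseF (a : ℝ) (k : ℕ) : ℝ := ∏ i ∈ Finset.range k, (a + i)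

/-- Ewens–Pitman moment `m(η) = 𝔼_{α,θ}[ ̃P_η]` (the `θ`-factor cancelled form of
`∏_{l=0}^{d-1}(θ+lα)/(θ)_{(n)} ∏ (1-α)_{(η_i-1)}`). -/
noncomputable def EPM (α θ : ℝ) (η : Multiset ℕ) : ℝ :=
  (∏ l ∈ Finset.Ico 1 (Multiset.card η), (θ + l * α)) /
      (∏ i ∈ Finset.Ico 1 η.sum, (θ + i)) *
    (η.map (fun p => riseF (1 - α) (p - 1))).prod

/-- `a₁(η)! ⋯ a_n(η)!`. -/
def aprod (η : Multiset ℕ) : ℕ := ∏ k ∈ Finset.Icc 1 η.sum, Nat.factorial (η.count k)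

/-- Chinese-restaurant edge weight `χ_B(ω,η)`. -/
def chiB (ω η : Multiset ℕ) : ℕ :=
  if (η - ω).sum = 1 then 1 else ω.count ((η - ω).sum - 1)

/-- Augmented monomial symmetric function as a real-valued function. -/
noncomputable def tildePR (N : ℕ) (η : List ℕ) (x : Fin N → ℝ) : ℝ :=
  ∑ f ∈ (Finset.univ : Finset (Fin η.length → Fin N)).filter Function.Injective,
    ∏ j, x (f j) ^ η.get j

/-- Monomial symmetric function: sum over distinct rearrangements of `η`. -/
noncomputable def monoP (N : ℕ) (η : Multiset ℕ) (x : Fin N → ℝ) : ℝ :=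
  ∑ v ∈ (Finset.univ : Finset (Fin N → Fin (η.sum + 1))).filter
      (fun v => Multiset.filter (fun a => 0 < a)
        (Multiset.map (fun i => ((v i : ℕ))) (Finset.univ : Finset (Fin N)).val) = η),
    ∏ i, x i ^ ((v i : ℕ))

/-- `\vec P_η(x) = (n choose η) P_η(x)`. -/
noncomputable def vecP (N : ℕ) (η : Multiset ℕ) (x : Fin N → ℝ) : ℝ :=
  (Nat.factorial η.sum : ℝ) / ((η.map Nat.factorial).prod : ℕ) * monoP N η x

/-- Augmented monomial symmetric polynomial. -/
noncomputable def tildePoly (N : ℕ) (η : List ℕ) : MvPolynomial (Fin N) ℝ :=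
  ∑ f ∈ (Finset.univ : Finset (Fin η.length → Fin N)).filter Function.Injective,
    ∏ j, (MvPolynomial.X (f j)) ^ η.get j

/-- The operator `𝓛_{α,θ}` on polynomials. -/
noncomputable def Lop (α θ : ℝ) {N : ℕ} (p : MvPolynomial (Fin N) ℝ) :
    MvPolynomial (Fin N) ℝ :=
  MvPolynomial.C (1 / 2 : ℝ) *
      (∑ i, ∑ j, MvPolynomial.X i * ((if i = j then 1 else 0) - MvPolynomial.X j) *
        MvPolynomial.pderiv i (MvPolynomial.pderiv j p)) -
    MvPolynomial.C (1 / 2 : ℝ) *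
      (∑ i, (MvPolynomial.C θ * MvPolynomial.X i + MvPolynomial.C α) * MvPolynomial.pderiv i p)

/-- The ideal generated by `∑ xᵢ - 1` (identities on the simplex). -/
noncomputable def simplexIdeal (N : ℕ) : Ideal (MvPolynomial (Fin N) ℝ) :=
  Ideal.span {(∑ i, MvPolynomial.X i) - 1}

/-- The Ewens–Pitman sampling formula
`M_n(η) = (n choose η) (1/∏ a_k(η)!) ⋅ m(η)`. -/
noncomputable def EPSF (α θ : ℝ) (η : Multiset ℕ) : ℝ :=
  multR η / (aprod η : ℝ) * EPM α θ η

section EPSFhelpers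

lemma riseF_succ' (a : ℝ) (k : ℕ) : riseF a (k + 1) = riseF a k * (a + k) :=
  Finset.prod_range_succ _ _

lemma riseF_zero' (a : ℝ) : riseF a 0 = 1 := Finset.prod_range_zero _

lemma aprod_pos' (η : Multiset ℕ) : 0 < aprod η :=
  Finset.prod_pos fun _ _ => Nat.factorial_pos _

lemma multR_pos' (η : Multiset ℕ) : 0 < multR η := by
  unfold multR
  apply div_pos
  · exact_mod_cast Nat.factorial_pos _
  · have h : 0 < (Multiset.map Nat.factorial η).prod :=
      Multiset.prod_pos (by
        intro a ha
        rcases Multiset.mem_map.mp ha with ⟨b, _, rfl⟩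
        exact Nat.factorial_pos b)
    exact_mod_cast h

lemma mem_le_sum' {a : ℕ} {η : Multiset ℕ} (h : a ∈ η) : a ≤ η.sum := by
  have : η.sum = a + (η.erase a).sum := by
    conv_lhs => rw [← Multiset.cons_erase h]
    rw [Multiset.sum_cons]
  omega

lemma chiW_cons_one' (η : Multiset ℕ) : chiW η (1 ::ₘ η) = η.count 1 + 1 := by
  have hsub : (1 ::ₘ η) - η = {1} := by
    ext j
    rw [Multiset.count_sub, Multiset.count_cons, Multiset.count_singleton]
    split_ifs <;> omega
  rw [chiW, hsub]
  simp [Multiset.count_cons]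

lemma chiW_up' (η : Multiset ℕ) (k : ℕ) (hk : k ∈ η) :
    chiW η ((k + 1) ::ₘ η.erase k) = η.count (k + 1) + 1 := by
  have hsub : ((k + 1) ::ₘ η.erase k) - η = {k + 1} := by
    ext j
    rw [Multiset.count_sub, Multiset.count_cons, Multiset.count_singleton]
    rcases eq_or_ne j k with rfl | hjk
    · have h1 : 1 ≤ η.count j := Multiset.one_le_count_iff_mem.mpr hk
      rw [Multiset.count_erase_self]
      split_ifs <;> omega
    · rw [Multiset.count_erase_of_ne hjk]
      split_ifs <;> omega
  rw [chiW, hsub]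
  have hk1 : (k + 1 : ℕ) ≠ k := by omega
  rw [Multiset.sum_singleton, Multiset.count_cons_self, Multiset.count_erase_of_ne hk1]

lemma aprod_cons_one' (η : Multiset ℕ) (hpos : ∀ a ∈ η, 0 < a) (hm : 1 ≤ η.sum) :
    aprod (1 ::ₘ η) = (η.count 1 + 1) * aprod η := by
  unfold aprod
  have hsum : (1 ::ₘ η).sum = η.sum + 1 := by rw [Multiset.sum_cons]; omega
  rw [hsum]
  rw [Finset.prod_Icc_succ_top (by omega)]
  have h0 : (1 ::ₘ η).count (η.sum + 1) = 0 := by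
    rw [Multiset.count_eq_zero]
    intro hmem
    rcases Multiset.mem_cons.mp hmem with h | h
    · omega
    · have := mem_le_sum' h; omega
  rw [h0]
  simp only [Nat.factorial_zero, mul_one]
  have h1 : (1 : ℕ) ∈ Finset.Icc 1 η.sum := by simp [hm]
  rw [← Finset.mul_prod_erase _ (fun j => ((1 ::ₘ η).count j).factorial) h1,
    ← Finset.mul_prod_erase _ (fun j => (η.count j).factorial) h1]
  have hrest : ∏ j ∈ (Finset.Icc 1 η.sum).erase 1, ((1 ::ₘ η).count j).factorial
      = ∏ j ∈ (Finset.Icc 1 η.sum).erase 1, (η.count j).factorial := by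
    apply Finset.prod_congr rfl
    intro j hj
    have hne : j ≠ 1 := Finset.ne_of_mem_erase hj
    rw [Multiset.count_cons_of_ne hne]
  rw [hrest, Multiset.count_cons_self, Nat.factorial_succ]
  ring

lemma aprod_up' (η : Multiset ℕ) (hpos : ∀ a ∈ η, 0 < a) (k : ℕ) (hk : k ∈ η) :
    η.count k * aprod ((k + 1) ::ₘ η.erase k) = (η.count (k + 1) + 1) * aprod η := by
  have hk1 : 1 ≤ k := hpos k hk
  have hksum : k ≤ η.sum := mem_le_sum' hk
  have hesum : η.sum = k + (η.erase k).sum := by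
    conv_lhs => rw [← Multiset.cons_erase hk]
    rw [Multiset.sum_cons]
  set lam := (k + 1) ::ₘ η.erase k with hlam
  have hlsum : lam.sum = η.sum + 1 := by
    rw [hlam, Multiset.sum_cons]; omega
  -- counts of lam
  have hcount : ∀ j, j ≠ k → j ≠ k + 1 → lam.count j = η.count j := by
    intro j h1 h2
    rw [hlam, Multiset.count_cons_of_ne h2, Multiset.count_erase_of_ne h1]
  have hck : lam.count k = η.count k - 1 := by
    rw [hlam, Multiset.count_cons_of_ne (by omega), Multiset.count_erase_self]
  have hck1 : lam.count (k + 1) = η.count (k + 1) + 1 := by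
    rw [hlam, Multiset.count_cons_self, Multiset.count_erase_of_ne (by omega)]
  -- extend aprod η to range Icc 1 (η.sum + 1)
  have hηtop : η.count (η.sum + 1) = 0 := by
    rw [Multiset.count_eq_zero]
    intro hmem
    have := mem_le_sum' hmem; omega
  unfold aprod
  rw [hlsum]
  have hηext : ∏ j ∈ Finset.Icc 1 η.sum, (η.count j).factorial
      = ∏ j ∈ Finset.Icc 1 (η.sum + 1), (η.count j).factorial := by
    rw [Finset.prod_Icc_succ_top (by omega), hηtop, Nat.factorial_zero, mul_one]
  rw [hηext]
  -- split off k and k+1 from both products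
  have hkmem : k ∈ Finset.Icc 1 (η.sum + 1) := by simp; omega
  have hk1mem : k + 1 ∈ (Finset.Icc 1 (η.sum + 1)).erase k := by
    rw [Finset.mem_erase, Finset.mem_Icc]
    omega
  have split : ∀ c : ℕ → ℕ, ∏ j ∈ Finset.Icc 1 (η.sum + 1), (c j).factorial
      = (c k).factorial * ((c (k + 1)).factorial *
        ∏ j ∈ ((Finset.Icc 1 (η.sum + 1)).erase k).erase (k + 1), (c j).factorial) := by
    intro c
    rw [← Finset.mul_prod_erase _ _ hkmem, ← Finset.mul_prod_erase _ _ hk1mem]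
  rw [split (lam.count), split (η.count)]
  have hrest : ∏ j ∈ ((Finset.Icc 1 (η.sum + 1)).erase k).erase (k + 1), (lam.count j).factorial
      = ∏ j ∈ ((Finset.Icc 1 (η.sum + 1)).erase k).erase (k + 1), (η.count j).factorial := by
    apply Finset.prod_congr rfl
    intro j hj
    have h2 : j ≠ k + 1 := Finset.ne_of_mem_erase hj
    have h1 : j ≠ k := Finset.ne_of_mem_erase (Finset.mem_of_mem_erase hj)
    rw [hcount j h1 h2]
  rw [hrest, hck, hck1, Nat.factorial_succ]
  have hc1 : 1 ≤ η.count k := Multiset.one_le_count_iff_mem.mpr hk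
  have hfac : η.count k * (η.count k - 1).factorial = (η.count k).factorial :=
    Nat.mul_factorial_pred (by omega)
  calc η.count k * ((η.count k - 1).factorial * ((η.count (k+1) + 1) * (η.count (k+1)).factorial *
        ∏ j ∈ ((Finset.Icc 1 (η.sum + 1)).erase k).erase (k + 1), (η.count j).factorial))
      = (η.count (k+1) + 1) * ((η.count k * (η.count k - 1).factorial) * ((η.count (k+1)).factorial *
        ∏ j ∈ ((Finset.Icc 1 (η.sum + 1)).erase k).erase (k + 1), (η.count j).factorial)) := by ring
    _ = _ := by rw [hfac]

lemma EPM_cons_one' (α θ : ℝ) (η : Multiset ℕ) (hd : 1 ≤ Multiset.card η) (hm : 1 ≤ η.sum) :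
    EPM α θ (1 ::ₘ η) = EPM α θ η * ((θ + Multiset.card η * α) / (θ + η.sum)) := by
  unfold EPM
  have hc : Multiset.card (1 ::ₘ η) = Multiset.card η + 1 := Multiset.card_cons _ _
  have hs : (1 ::ₘ η).sum = η.sum + 1 := by rw [Multiset.sum_cons]; omega
  rw [hc, hs, Finset.prod_Ico_succ_top hd, Finset.prod_Ico_succ_top hm]
  rw [Multiset.map_cons, Multiset.prod_cons]
  simp only [Nat.sub_self, riseF_zero', one_mul]
  generalize (∏ l ∈ Finset.Ico 1 (Multiset.card η), (θ + (l : ℝ) * α)) = A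
  generalize (∏ i ∈ Finset.Ico 1 η.sum, (θ + (i : ℝ))) = B
  generalize (Multiset.map (fun p => riseF (1 - α) (p - 1)) η).prod = P
  generalize (θ + ((Multiset.card η) : ℝ) * α) = c
  generalize (θ + (η.sum : ℝ)) = d
  ring

lemma EPM_up' (α θ : ℝ) (η : Multiset ℕ) (hm : 1 ≤ η.sum) (k : ℕ) (hk : k ∈ η) (hk1 : 1 ≤ k) :
    EPM α θ ((k + 1) ::ₘ η.erase k) = EPM α θ η * ((k - α) / (θ + η.sum)) := by
  unfold EPM
  have hcard : 1 ≤ Multiset.card η := Multiset.card_pos.mpr (by rintro rfl; simp at hk)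
  have hc : Multiset.card ((k + 1) ::ₘ η.erase k) = Multiset.card η := by
    rw [Multiset.card_cons, Multiset.card_erase_of_mem hk, Nat.pred_eq_sub_one]
    omega
  have hesum : η.sum = k + (η.erase k).sum := by
    conv_lhs => rw [← Multiset.cons_erase hk]
    rw [Multiset.sum_cons]
  have hs : ((k + 1) ::ₘ η.erase k).sum = η.sum + 1 := by
    rw [Multiset.sum_cons]; omega
  rw [hc, hs, Finset.prod_Ico_succ_top hm]
  rw [Multiset.map_cons, Multiset.prod_cons]
  have hηprod : (Multiset.map (fun p => riseF (1 - α) (p - 1)) η).prod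
      = riseF (1 - α) (k - 1) * (Multiset.map (fun p => riseF (1 - α) (p - 1)) (η.erase k)).prod := by
    conv_lhs => rw [← Multiset.cons_erase hk]
    rw [Multiset.map_cons, Multiset.prod_cons]
  have hrise : riseF (1 - α) (k + 1 - 1) = riseF (1 - α) (k - 1) * (k - α) := by
    have h1 : k + 1 - 1 = (k - 1) + 1 := by omega
    rw [h1, riseF_succ']
    have h2 : ((k - 1 : ℕ) : ℝ) = (k : ℝ) - 1 := by
      have h3 := Nat.cast_sub (R := ℝ) hk1
      simpa using h3
    rw [h2]; ring
  rw [hηprod, hrise]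
  generalize (∏ l ∈ Finset.Ico 1 (Multiset.card η), (θ + (l : ℝ) * α)) = A
  generalize (∏ i ∈ Finset.Ico 1 η.sum, (θ + (i : ℝ))) = B
  generalize (Multiset.map (fun p => riseF (1 - α) (p - 1)) (η.erase k)).prod = E
  generalize riseF (1 - α) (k - 1) = F
  generalize (θ + (η.sum : ℝ)) = d
  ring

lemma term_one' (α θ : ℝ) (η : Multiset ℕ) (hpos : ∀ a ∈ η, 0 < a)
    (hd : 1 ≤ Multiset.card η) (hm : 1 ≤ η.sum) (hθd : (θ + (η.sum : ℝ)) ≠ 0) :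
    multR η * (chiW η (1 ::ₘ η) : ℝ) / multR (1 ::ₘ η) * EPSF α θ (1 ::ₘ η)
      = multR η / (aprod η : ℝ) * EPM α θ η * ((θ + Multiset.card η * α) / (θ + η.sum)) := by
  simp only [EPSF]
  rw [chiW_cons_one', aprod_cons_one' η hpos hm, EPM_cons_one' α θ η hd hm]
  have hM : multR (1 ::ₘ η) ≠ 0 := ne_of_gt (multR_pos' _)
  have hA : ((aprod η : ℕ) : ℝ) ≠ 0 := by exact_mod_cast (aprod_pos' η).ne'
  have hc : ((η.count 1 + 1 : ℕ) : ℝ) ≠ 0 := by positivity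
  rw [Nat.cast_mul]
  generalize hD : (θ + ((η.sum : ℕ) : ℝ)) = D at hθd ⊢
  generalize hc' : ((η.count 1 + 1 : ℕ) : ℝ) = c at hc ⊢
  generalize hA' : ((aprod η : ℕ) : ℝ) = A at hA ⊢
  generalize hM' : multR (1 ::ₘ η) = M at hM ⊢
  field_simp

lemma term_up' (α θ : ℝ) (η : Multiset ℕ) (hpos : ∀ a ∈ η, 0 < a)
    (hm : 1 ≤ η.sum) (hθd : (θ + (η.sum : ℝ)) ≠ 0) (k : ℕ) (hk : k ∈ η) :
    multR η * (chiW η ((k + 1) ::ₘ η.erase k) : ℝ) / multR ((k + 1) ::ₘ η.erase k) *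
        EPSF α θ ((k + 1) ::ₘ η.erase k)
      = multR η / (aprod η : ℝ) * EPM α θ η *
        ((η.count k : ℝ) * ((k : ℝ) - α) / (θ + η.sum)) := by
  have hk1 : 1 ≤ k := hpos k hk
  simp only [EPSF]
  rw [chiW_up' η k hk, EPM_up' α θ η hm k hk hk1]
  have hM : multR ((k + 1) ::ₘ η.erase k) ≠ 0 := ne_of_gt (multR_pos' _)
  have hA : ((aprod η : ℕ) : ℝ) ≠ 0 := by exact_mod_cast (aprod_pos' η).ne'
  have hck : ((η.count k : ℕ) : ℝ) ≠ 0 := by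
    have h1 : 0 < η.count k := Multiset.count_pos.mpr hk
    exact_mod_cast h1.ne'
  have keyR : ((η.count k : ℕ) : ℝ) * ((aprod ((k + 1) ::ₘ η.erase k) : ℕ) : ℝ)
      = ((η.count (k + 1) + 1 : ℕ) : ℝ) * ((aprod η : ℕ) : ℝ) := by
    exact_mod_cast congrArg (Nat.cast (R := ℝ)) (aprod_up' η hpos k hk)
  have hAl : ((aprod ((k + 1) ::ₘ η.erase k) : ℕ) : ℝ)
      = ((η.count (k + 1) + 1 : ℕ) : ℝ) * ((aprod η : ℕ) : ℝ) / ((η.count k : ℕ) : ℝ) := by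
    rw [eq_div_iff hck]
    linarith [keyR]
  rw [hAl]
  have hc1 : ((η.count (k + 1) + 1 : ℕ) : ℝ) ≠ 0 := by positivity
  generalize hD : (θ + ((η.sum : ℕ) : ℝ)) = D at hθd ⊢
  generalize hc' : ((η.count (k + 1) + 1 : ℕ) : ℝ) = c at hc1 ⊢
  generalize hck' : ((η.count k : ℕ) : ℝ) = ck at hck ⊢
  generalize hA' : ((aprod η : ℕ) : ℝ) = A at hA ⊢
  generalize hM' : multR ((k + 1) ::ₘ η.erase k) = M at hM ⊢
  generalize hE : (Multiset.map (fun p => riseF (1 - α) (p - 1)) η).prod = E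
  field_simp

end EPSFhelpers

/-- Consistency of the Ewens–Pitman sampling formula:
`M_{n-1}(η) = ∑_{λ covers η} ((n-1 choose η) χ(η,λ) / (n choose λ)) M_n(λ)`. -/
theorem EPSF_consistency (α θ : ℝ) (hα0 : 0 ≤ α) (hα1 : α < 1) (hθ : -α < θ)
    (n : ℕ) (hn : 1 ≤ n) (η : Multiset ℕ) (hpos : ∀ a ∈ η, 0 < a)
    (hsum : η.sum = n - 1) :
    EPSF α θ η =
      ∑ lam ∈ upSet η, multR η * (chiW η lam : ℝ) / multR lam * EPSF α θ lam := by
  clear hsum hn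
  rcases eq_or_ne η 0 with rfl | hη
  · rw [upSet]
    simp only [Multiset.toFinset_zero, Finset.image_empty, LawfulSingleton.insert_empty_eq,
      Finset.sum_singleton]
    norm_num [EPSF, multR, aprod, EPM, chiW, riseF]
  · have hd : 1 ≤ Multiset.card η := Multiset.card_pos.mpr hη
    obtain ⟨a0, ha0⟩ := Multiset.exists_mem_of_ne_zero hη
    have hm : 1 ≤ η.sum := le_trans (hpos a0 ha0) (mem_le_sum' ha0)
    have hm' : (1 : ℝ) ≤ (η.sum : ℝ) := by exact_mod_cast hm
    have hθdpos : (0 : ℝ) < θ + (η.sum : ℝ) := by linarith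
    have hθd : (θ + (η.sum : ℝ)) ≠ 0 := ne_of_gt hθdpos
    have hnot : (1 ::ₘ η) ∉ η.toFinset.image (fun k => (k + 1) ::ₘ η.erase k) := by
      intro hmem
      rcases Finset.mem_image.mp hmem with ⟨k, hk, heq⟩
      have hk' : k ∈ η := Multiset.mem_toFinset.mp hk
      have hk1 : 1 ≤ k := hpos k hk'
      have := congrArg (Multiset.count 1) heq
      rw [Multiset.count_cons, Multiset.count_cons] at this
      have hle : Multiset.count 1 (η.erase k) ≤ Multiset.count 1 η :=
        Multiset.count_le_of_le 1 (Multiset.erase_le k η)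
      split_ifs at this <;> omega
    have hinj : ∀ x ∈ η.toFinset, ∀ y ∈ η.toFinset,
        (fun k => (k + 1) ::ₘ η.erase k) x = (fun k => (k + 1) ::ₘ η.erase k) y → x = y := by
      intro x hx y hy h
      by_contra hxy
      have hx' : x ∈ η := Multiset.mem_toFinset.mp hx
      have hcx : 1 ≤ η.count x := Multiset.one_le_count_iff_mem.mpr hx'
      simp only at h
      have := congrArg (Multiset.count x) h
      rw [Multiset.count_cons, Multiset.count_cons, Multiset.count_erase_self,
        Multiset.count_erase_of_ne hxy] at this
      split_ifs at this <;> omega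
    rw [upSet, Finset.sum_insert hnot, Finset.sum_image hinj]
    rw [term_one' α θ η hpos hd hm hθd]
    rw [Finset.sum_congr rfl
      (fun k hk => term_up' α θ η hpos hm hθd k (Multiset.mem_toFinset.mp hk))]
    have hfac : ∀ k ∈ η.toFinset,
        multR η / (aprod η : ℝ) * EPM α θ η *
            ((η.count k : ℝ) * ((k : ℝ) - α) / (θ + (η.sum : ℝ)))
          = multR η / (aprod η : ℝ) * EPM α θ η / (θ + (η.sum : ℝ)) *
            ((η.count k : ℝ) * ((k : ℝ) - α)) := by
      intro k _
      generalize multR η / (aprod η : ℝ) * EPM α θ η = C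
      generalize (θ + ((η.sum : ℕ) : ℝ)) = D
      ring
    rw [Finset.sum_congr rfl hfac, ← Finset.mul_sum]
    have h1 : ∑ k ∈ η.toFinset, η.count k * k = η.sum := by
      have h := Finset.sum_multiset_map_count η (id : ℕ → ℕ)
      simpa [smul_eq_mul] using h.symm
    have h2 : ∑ k ∈ η.toFinset, η.count k = Multiset.card η :=
      Multiset.toFinset_sum_count_eq η
    have hsum1 : ∑ k ∈ η.toFinset, ((η.count k : ℝ) * ((k : ℝ) - α))
        = (η.sum : ℝ) - (Multiset.card η : ℝ) * α := by
      have step : ∀ k ∈ η.toFinset, ((η.count k : ℝ) * ((k : ℝ) - α))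
          = ((η.count k * k : ℕ) : ℝ) - ((η.count k : ℕ) : ℝ) * α := by
        intro k _
        push_cast
        ring
      rw [Finset.sum_congr rfl step, Finset.sum_sub_distrib, ← Finset.sum_mul,
        ← Nat.cast_sum, ← Nat.cast_sum, h1, h2]
    rw [hsum1]
    have hEη : EPSF α θ η = multR η / (aprod η : ℝ) * EPM α θ η := rfl
    rw [hEη]
    generalize multR η / (aprod η : ℝ) * EPM α θ η = C
    generalize hcard : ((Multiset.card η : ℕ) : ℝ) = d
    generalize hD : ((η.sum : ℕ) : ℝ) = m at hθd
    field_simp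
    ring
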